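/- For the identity embedding J : L_∞^N → L₁^N restricted to the Boolean cube {0,1}^N ⊆ B(L_∞^N), the k-th inner entropy number satisfies φ_k(J({0,1}^N), L₁^N) ≥ 1/8 whenever k + 1 ≤ 2^{c₁N} with c₁ = (1/4)log₂(4/e), i.e., there exist k+1 points in {0,1}^N (with k+1 = ⌈2^{c₁N}⌉) that are pairwise at L₁^N-distance ≥ 1/4. -/

import Mathlib

/-- The constant c₁ = (1/4)·log₂(4/e). -/
noncomputable def c₁ : ℝ := (1 / 4) * Real.logb 2 (4 / Real.exp 1)

lemma sum_third_pow_hamming (N : ℕ) (s : Fin N → Bool) :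
    ∑ v : Fin N → Bool, ((1:ℝ)/3) ^ (hammingDist v s) = (4/3) ^ N := by
  have h1 : ∀ v : Fin N → Bool, ((1:ℝ)/3) ^ (hammingDist v s)
      = ∏ i : Fin N, (if v i = s i then (1:ℝ) else 1/3) := by
    intro v
    rw [show hammingDist v s = (Finset.univ.filter fun i => ¬ (v i = s i)).card from rfl]
    rw [← Finset.prod_filter_mul_prod_filter_not Finset.univ (fun i => v i = s i)]
    rw [Finset.prod_ite_of_true (by intro i hi; exact (Finset.mem_filter.mp hi).2),
        Finset.prod_ite_of_false (by intro i hi; exact (Finset.mem_filter.mp hi).2)]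
    simp
  simp_rw [h1]
  rw [← Fintype.piFinset_univ, ← Finset.prod_univ_sum (fun _ => Finset.univ)
    (fun i b => if b = s i then (1:ℝ) else 1/3)]
  have : ∀ i : Fin N, (∑ b : Bool, if b = s i then (1:ℝ) else 1/3) = 4/3 := by
    intro i; cases hsi : s i <;> simp [Fintype.sum_bool, hsi] <;> norm_num
  rw [Finset.prod_congr rfl (fun i _ => this i), Finset.prod_const, Finset.card_univ,
    Fintype.card_fin]

lemma ball_bound (N r : ℕ) (s : Fin N → Bool) :
    ((Finset.univ.filter fun v => hammingDist v s ≤ r).card : ℝ)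
      ≤ 3 ^ r * (4/3) ^ N := by
  have key : ((Finset.univ.filter fun v => hammingDist v s ≤ r).card : ℝ) * (1/3)^r
      ≤ (4/3) ^ N := by
    rw [← sum_third_pow_hamming N s]
    calc ((Finset.univ.filter fun v => hammingDist v s ≤ r).card : ℝ) * (1/3)^r
        = ∑ _v ∈ (Finset.univ.filter fun v => hammingDist v s ≤ r), ((1:ℝ)/3)^r := by
          rw [Finset.sum_const, nsmul_eq_mul]
      _ ≤ ∑ v ∈ (Finset.univ.filter fun v => hammingDist v s ≤ r),
            ((1:ℝ)/3) ^ (hammingDist v s) := by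
          apply Finset.sum_le_sum
          intro v hv
          exact pow_le_pow_of_le_one (by norm_num) (by norm_num)
            (Finset.mem_filter.mp hv).2
      _ ≤ ∑ v : Fin N → Bool, ((1:ℝ)/3) ^ (hammingDist v s) := by
          apply Finset.sum_le_sum_of_subset_of_nonneg (Finset.filter_subset _ _)
          intro v _ _; positivity
  have h3 : (0:ℝ) < (1/3)^r := by positivity
  rw [show ((3:ℝ)^r * (4/3)^N) = (4/3)^N / (1/3)^r by
    rw [eq_div_iff h3.ne', mul_assoc, mul_comm ((4/3:ℝ)^N), ← mul_assoc, ← mul_pow]; norm_num]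
  exact (le_div_iff₀ h3).mpr key

lemma log_ineq : 6 * Real.log 2 - 3 * Real.log 3 ≤ 1 := by
  have h64 : Real.log 64 = 6 * Real.log 2 := by
    rw [show (64:ℝ) = 2^(6:ℕ) by norm_num, Real.log_pow]; push_cast; ring
  have h27 : Real.log 27 = 3 * Real.log 3 := by
    rw [show (27:ℝ) = 3^(3:ℕ) by norm_num, Real.log_pow]; push_cast; ring
  have h : Real.log ((64:ℝ)/27) ≤ 1 := by
    rw [Real.log_le_iff_le_exp (by norm_num)]
    have := Real.exp_one_gt_d9
    nlinarith
  rw [Real.log_div (by norm_num) (by norm_num), h64, h27] at h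
  linarith

lemma c1_log : c₁ * Real.log 2 = (1/4) * (2 * Real.log 2 - 1) := by
  have h2 : Real.log 2 ≠ 0 := by
    have := Real.log_pos (by norm_num : (1:ℝ) < 2); linarith
  rw [c₁, Real.logb, Real.log_div (by norm_num) (Real.exp_ne_zero 1),
    Real.log_exp, show (4:ℝ) = 2^(2:ℕ) by norm_num, Real.log_pow]
  field_simp
  ring

lemma main_rpow (x : ℝ) (hx : 0 ≤ x) :
    (2:ℝ)^(c₁ * x) * (3:ℝ)^(x/4) * ((4:ℝ)/3)^x ≤ (2:ℝ)^x := by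
  rw [Real.rpow_def_of_pos (by norm_num : (0:ℝ) < 2),
    Real.rpow_def_of_pos (by norm_num : (0:ℝ) < 3),
    Real.rpow_def_of_pos (by norm_num : (0:ℝ) < 4/3),
    Real.rpow_def_of_pos (by norm_num : (0:ℝ) < 2),
    ← Real.exp_add, ← Real.exp_add, Real.exp_le_exp]
  have h43 : Real.log (4/3) = 2 * Real.log 2 - Real.log 3 := by
    rw [Real.log_div (by norm_num) (by norm_num),
      show (4:ℝ) = 2^(2:ℕ) by norm_num, Real.log_pow]; push_cast; ring
  have hcoef : c₁ * Real.log 2 + (1/4) * Real.log 3 + Real.log (4/3) ≤ Real.log 2 := by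
    rw [c1_log, h43]; have := log_ineq; linarith
  nlinarith [mul_le_mul_of_nonneg_left hcoef hx]

theorem stmt_13 (N : ℕ) (k : ℕ) (hk : 1 ≤ k)
    (hkN : ((k : ℝ) + 1) ≤ (2 : ℝ) ^ (c₁ * N)) :
    ∃ u : Fin (k + 1) → (Fin N → Bool),
      ∀ i j, i ≠ j →
        (1 : ℝ) / 4 ≤ ((Finset.univ.filter fun ℓ => u i ℓ ≠ u j ℓ).card : ℝ) / N := by
  classical
  -- N ≥ 1
  have hk1 : (1:ℝ) ≤ (k:ℝ) := by exact_mod_cast hk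
  have hN : 1 ≤ N := by
    by_contra h
    push_neg at h
    interval_cases N
    simp only [Nat.cast_zero, mul_zero, Real.rpow_zero] at hkN
    linarith
  have hN0 : (0:ℝ) < N := by exact_mod_cast hN
  set t : ℕ := ⌈(N:ℝ)/4⌉₊ with htdef
  have ht1 : 1 ≤ t := Nat.one_le_iff_ne_zero.mpr (by
    simp only [htdef, ne_eq, Nat.ceil_eq_zero, not_le]
    positivity)
  have htle : (N:ℝ)/4 ≤ t := Nat.le_ceil _
  have htlt : (t:ℝ) < (N:ℝ)/4 + 1 := Nat.ceil_lt_add_one (by positivity)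
  -- maximal separated set
  set P : Finset (Fin N → Bool) → Prop :=
    fun S => ∀ u ∈ S, ∀ v ∈ S, u ≠ v → t ≤ hammingDist u v with hPdef
  obtain ⟨S, hSmem, hmax⟩ := Finset.exists_max_image
    (Finset.univ.filter P) Finset.card
    ⟨∅, by simp [hPdef]⟩
  have hPS : P S := (Finset.mem_filter.mp hSmem).2
  -- main claim: S has at least k+1 elements
  have hcard : k + 1 ≤ S.card := by
    by_contra hlt
    push_neg at hlt
    have hSk : S.card ≤ k := Nat.lt_succ_iff.mp hlt
    -- covering property from maximality
    have hcover : ∀ w : Fin N → Bool, ∃ s ∈ S, hammingDist w s ≤ t - 1 := by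
      intro w
      by_contra hc
      push_neg at hc
      have hfar : ∀ s ∈ S, t ≤ hammingDist w s := by
        intro s hs
        have := hc s hs
        omega
      have hwS : w ∉ S := by
        intro hw
        have := hfar w hw
        simp [hammingDist_self] at this
        omega
      have hPT : P (insert w S) := by
        intro u hu v hv huv
        rcases Finset.mem_insert.mp hu with h1 | hu'
        · rcases Finset.mem_insert.mp hv with h2 | hv'
          · exact absurd (h1.trans h2.symm) huv
          · rw [h1]; exact hfar v hv'
        · rcases Finset.mem_insert.mp hv with h2 | hv'
          · rw [h2, hammingDist_comm]; exact hfar u hu'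
          · exact hPS u hu' v hv' huv
      have := hmax (insert w S) (Finset.mem_filter.mpr ⟨Finset.mem_univ _, hPT⟩)
      rw [Finset.card_insert_of_notMem hwS] at this
      omega
    -- counting
    have hsub : (Finset.univ : Finset (Fin N → Bool)) ⊆
        S.biUnion (fun s => Finset.univ.filter fun v => hammingDist v s ≤ t - 1) := by
      intro w _
      obtain ⟨s, hs, hds⟩ := hcover w
      exact Finset.mem_biUnion.mpr ⟨s, hs, Finset.mem_filter.mpr ⟨Finset.mem_univ _, hds⟩⟩
    have hcount : (2:ℝ)^N ≤ (S.card : ℝ) * (3 ^ (t-1) * (4/3) ^ N) := by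
      have h1 : (2^N : ℕ) ≤ ∑ s ∈ S,
          (Finset.univ.filter fun v => hammingDist v s ≤ t - 1).card := by
        calc (2^N : ℕ) = (Finset.univ : Finset (Fin N → Bool)).card := by
              simp [Finset.card_univ]
          _ ≤ (S.biUnion (fun s => Finset.univ.filter fun v =>
                hammingDist v s ≤ t - 1)).card := Finset.card_le_card hsub
          _ ≤ _ := Finset.card_biUnion_le
      have h2 : ((2^N : ℕ) : ℝ) ≤ ∑ s ∈ S,
          ((Finset.univ.filter fun v => hammingDist v s ≤ t - 1).card : ℝ) := by
        exact_mod_cast h1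
      calc (2:ℝ)^N = ((2^N : ℕ) : ℝ) := by push_cast; ring
        _ ≤ ∑ s ∈ S, ((Finset.univ.filter fun v =>
              hammingDist v s ≤ t - 1).card : ℝ) := h2
        _ ≤ ∑ _s ∈ S, (3:ℝ) ^ (t-1) * (4/3) ^ N :=
            Finset.sum_le_sum (fun s _ => ball_bound N (t-1) s)
        _ = (S.card : ℝ) * (3 ^ (t-1) * (4/3) ^ N) := by
            rw [Finset.sum_const, nsmul_eq_mul]
      -- numeric contradiction
    have hkR : (S.card : ℝ) ≤ (k:ℝ) := by exact_mod_cast hSk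
    have hklt : (k:ℝ) < (2:ℝ) ^ (c₁ * N) := by linarith
    have hx : (0:ℝ) ≤ (N:ℝ) := le_of_lt hN0
    have h3pow : ((3:ℝ) ^ (t-1) : ℝ) ≤ (3:ℝ) ^ ((N:ℝ)/4) := by
      rw [← Real.rpow_natCast 3 (t-1)]
      apply Real.rpow_le_rpow_of_exponent_le (by norm_num)
      have : ((t-1 : ℕ) : ℝ) = (t:ℝ) - 1 := by
        push_cast [Nat.cast_sub ht1]; ring
      rw [this]
      linarith
    have h43pow : ((4:ℝ)/3) ^ N = ((4:ℝ)/3) ^ ((N:ℝ)) := by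
      rw [Real.rpow_natCast]
    have h2pow : (2:ℝ) ^ N = (2:ℝ) ^ ((N:ℝ)) := by
      rw [Real.rpow_natCast]
    have hfinal : (2:ℝ)^((N:ℝ)) < (2:ℝ)^((N:ℝ)) := by
      calc (2:ℝ)^((N:ℝ)) = (2:ℝ)^N := h2pow.symm
        _ ≤ (S.card : ℝ) * (3 ^ (t-1) * (4/3) ^ N) := hcount
        _ ≤ (k:ℝ) * (3 ^ (t-1) * (4/3) ^ N) := by
            apply mul_le_mul_of_nonneg_right hkR
            positivity
        _ < (2:ℝ)^(c₁ * N) * ((3:ℝ) ^ (t-1) * (4/3) ^ N) := by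
            apply mul_lt_mul_of_pos_right hklt; positivity
        _ ≤ (2:ℝ)^(c₁ * N) * ((3:ℝ) ^ ((N:ℝ)/4) * (4/3) ^ N) := by
            apply mul_le_mul_of_nonneg_left _ (by positivity)
            apply mul_le_mul_of_nonneg_right h3pow; positivity
        _ = (2:ℝ)^(c₁ * N) * (3:ℝ) ^ ((N:ℝ)/4) * ((4:ℝ)/3) ^ ((N:ℝ)) := by
            rw [h43pow]; ring
        _ ≤ (2:ℝ)^((N:ℝ)) := main_rpow N hx
    exact absurd hfinal (lt_irrefl _)
  -- extract k+1 points
  obtain ⟨S', hS'sub, hS'card⟩ := Finset.exists_subset_card_eq hcard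
  set f : Fin (k+1) → (Fin N → Bool) :=
    fun i => (S'.equivFin.symm (Fin.cast hS'card.symm i) : _) with hfdef
  refine ⟨f, ?_⟩
  intro i j hij
  have hne : f i ≠ f j := by
    intro h
    apply hij
    have := S'.equivFin.symm.injective (Subtype.ext h)
    exact Fin.val_injective (by simpa using congrArg Fin.val this)
  have hmemi : f i ∈ S' := (S'.equivFin.symm (Fin.cast hS'card.symm i)).2
  have hmemj : f j ∈ S' := (S'.equivFin.symm (Fin.cast hS'card.symm j)).2
  have hd : t ≤ hammingDist (f i) (f j) :=
    hPS _ (hS'sub hmemi) _ (hS'sub hmemj) hne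
  have hdR : (N:ℝ)/4 ≤ (hammingDist (f i) (f j) : ℝ) := by
    calc (N:ℝ)/4 ≤ (t:ℝ) := htle
      _ ≤ _ := by exact_mod_cast hd
  have hcardeq : (Finset.univ.filter fun ℓ => f i ℓ ≠ f j ℓ).card
      = hammingDist (f i) (f j) := rfl
  rw [hcardeq, le_div_iff₀ hN0]
  calc (1:ℝ)/4 * N = (N:ℝ)/4 := by ring
    _ ≤ _ := hdR
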